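/- arXiv:2107.01532 — 7 statements merged into one kernel-verified Lean document; each statement's English description precedes it below -/
import Mathlib

section
/- For every real number k with 1575/32768 < k < 1764/32768, k/16 + ((524288k − 14175)·√(524288k − 14175) − 358425)/226492416 − ((131072k − 3087)·√(131072k − 3087))/28311552 > 0. (This is the strict positivity of the welfare difference between the learning sequence X1-then-X2 and the sequence X2-then-X1 when there is no early offer, used in the proof of part (i) of the lemma on optimal learning sequences.) -/
theorem welfare_diff_X1X2_vs_X2X1_no_early_offer
    (k : ℝ) (hk : 1575/32768 < k) (hk' : k < 1764/32768) :
    k/16 + ((524288*k - 14175) * Real.sqrt (524288*k - 14175) - 358425) / 226492416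
      - ((131072*k - 3087) * Real.sqrt (131072*k - 3087)) / 28311552 > 0 := by
  have hb0 : (3213:ℝ) < 131072*k - 3087 := by nlinarith
  have hb1 : 131072*k - 3087 < 3969 := by nlinarith
  set u := Real.sqrt (131072*k - 3087) with hu
  have hu2 : u^2 = 131072*k - 3087 := Real.sq_sqrt (by linarith)
  have hu0 : 0 ≤ u := Real.sqrt_nonneg _
  have hul : 56 < u := by nlinarith
  have huu : u < 63 := by nlinarith
  set s := Real.sqrt (524288*k - 14175) with hs
  have hs2 : s^2 = 524288*k - 14175 := Real.sq_sqrt (by nlinarith)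
  have hs0 : 0 ≤ s := Real.sqrt_nonneg _
  have hsa : s^2 = 4*u^2 - 1827 := by rw [hs2, hu2]; ring
  have hd0 : (0:ℝ) < 8*u^3 - 108*u^2 + 25029 := by nlinarith
  have hc0 : (0:ℝ) < 4*u^2 - 1827 := by nlinarith
  have hP : (4*u^2-1827)^3 > (8*u^3 - 108*u^2 + 25029)^2 := by
    nlinarith [mul_pos (mul_pos (sub_pos.mpr hul) (sub_pos.mpr hul)) (sub_pos.mpr huu),
      mul_pos (sub_pos.mpr hul) (sub_pos.mpr huu), sq_nonneg (u-56), sq_nonneg (u-63),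
      mul_pos (mul_pos (sub_pos.mpr hul) (sub_pos.mpr huu)) (sub_pos.mpr huu)]
  have key : s * (4*u^2 - 1827) > 8*u^3 - 108*u^2 + 25029 := by
    have h1 : (s * (4*u^2-1827))^2 = (4*u^2-1827)^3 := by
      rw [mul_pow, hsa]; ring
    nlinarith [mul_nonneg hs0 (le_of_lt hc0), hP, h1, hd0]
  have hbu : (131072*k - 3087) * u = u^3 := by rw [← hu2]; ring
  have has : (524288*k - 14175) * s = s * (4*u^2 - 1827) := by
    have : 524288*k - 14175 = 4*u^2 - 1827 := by rw [hu2]; ring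
    rw [this]; ring
  have hk2 : k = (u^2 + 3087)/131072 := by rw [hu2]; ring
  rw [hbu, has, hk2]
  nlinarith [key]
end

section
/- For every real number k with 1575/32768 < k < 1764/32768, k/16 + (8k·√(2k))/9 − ((8192k − 343)·√(8192k − 343))/589824 − 1375/1048576 > 0. (This is the strict positivity of the welfare difference between the learning sequence X1-then-X2 and X2-then-X1 when there is a single early offer from university 1, used in the proof of part (ii) of the lemma on optimal learning sequences.) -/
theorem welfare_diff_X1X2_vs_X2X1_early_offer_from_1
    (k : ℝ) (hk : 1575/32768 < k) (hk' : k < 1764/32768) :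
    k/16 + (8*k * Real.sqrt (2*k)) / 9
      - ((8192*k - 343) * Real.sqrt (8192*k - 343)) / 589824
      - 1375/1048576 > 0 := by
  have h2 : Real.sqrt (2*k) ≥ 31/100 := by
    rw [show (31:ℝ)/100 = Real.sqrt ((31/100)^2) from (Real.sqrt_sq (by norm_num)).symm]
    apply Real.sqrt_le_sqrt
    nlinarith
  have h3 : Real.sqrt (8192*k - 343) ≤ 99/10 := by
    rw [show (99:ℝ)/10 = Real.sqrt ((99/10)^2) from (Real.sqrt_sq (by norm_num)).symm]
    apply Real.sqrt_le_sqrt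
    nlinarith
  have h3n : Real.sqrt (8192*k - 343) ≥ 0 := Real.sqrt_nonneg _
  nlinarith [mul_pos (show (0:ℝ) < 8*k by nlinarith) (show (0:ℝ) < Real.sqrt (2*k) by positivity),
    mul_le_mul_of_nonneg_left h3 (show (0:ℝ) ≤ 8192*k - 343 by nlinarith),
    mul_le_mul_of_nonneg_right (show (31:ℝ)/100 ≤ Real.sqrt (2*k) from h2) (show (0:ℝ) ≤ 8*k by nlinarith)]
end

section
/- For every real number k with 1575/32768 < k < 1764/32768, (8k·√(2k))/9 − k/16 − ((32768k − 1575)·√(32768k − 1575))/4718592 + 789/524288 > 0. (This is the strict positivity of the welfare difference between the learning sequence X2-then-X1 and X1-then-X2 when there is a single early offer from university 2, used in the proof of part (iii) of the lemma on optimal learning sequences.) -/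
theorem welfare_diff_X2X1_vs_X1X2_early_offer_from_2
    (k : ℝ) (hk : 1575/32768 < k) (hk' : k < 1764/32768) :
    (8*k * Real.sqrt (2*k)) / 9 - k/16
      - ((32768*k - 1575) * Real.sqrt (32768*k - 1575)) / 4718592
      + 789/524288 > 0 := by
  have hk0 : 0 < k := by nlinarith
  have hu0 : (0:ℝ) ≤ 32768*k - 1575 := by nlinarith
  have hs1 : (39:ℝ)/128 ≤ Real.sqrt (2*k) := by
    rw [show (39:ℝ)/128 = Real.sqrt ((39/128)^2) from (Real.sqrt_sq (by norm_num)).symm]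
    apply Real.sqrt_le_sqrt; nlinarith
  have hs2 : Real.sqrt (32768*k - 1575) ≤ 14 := by
    rw [show (14:ℝ) = Real.sqrt (14^2) from (Real.sqrt_sq (by norm_num)).symm]
    apply Real.sqrt_le_sqrt; nlinarith
  nlinarith [mul_le_mul_of_nonneg_left hs1 hk0.le,
    mul_le_mul_of_nonneg_left hs2 hu0,
    Real.sqrt_nonneg (32768*k - 1575)]
end

section
/- For every real number k with 1575/32768 < k < 1764/32768, (8k·√(2k))/9 − (k·√(524288k − 14175))/288 + ((524288k − 14175)^(3/2))/254803968 > 0. (This is the strict welfare dominance of the Hybrid mechanism over the DA conditional on a single early offer from university 1, from the proof of the lemma on welfare comparisons.) -/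
theorem hybrid_dominates_DA_early_offer_from_1
    (k : ℝ) (hk : 1575/32768 < k) (hk' : k < 1764/32768) :
    (8*k * Real.sqrt (2*k)) / 9 - (k * Real.sqrt (524288*k - 14175)) / 288
      + (524288*k - 14175) ^ ((3:ℝ)/2) / 254803968 > 0 := by
  have hu1 : (11025:ℝ) < 524288*k - 14175 := by nlinarith
  have hu2 : (524288*k - 14175 : ℝ) < 14049 := by nlinarith
  have hupos : (0:ℝ) < 524288*k - 14175 := by linarith
  have hkpos : (0:ℝ) < k := by nlinarith
  have hs : Real.sqrt (2*k) ^ 2 = 2*k := Real.sq_sqrt (by linarith)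
  have ht : Real.sqrt (524288*k - 14175) ^ 2 = 524288*k - 14175 :=
    Real.sq_sqrt hupos.le
  have hspos : 0 < Real.sqrt (2*k) := Real.sqrt_pos.mpr (by linarith)
  have htpos : 0 < Real.sqrt (524288*k - 14175) := Real.sqrt_pos.mpr hupos
  have hrw : (524288*k - 14175) ^ ((3:ℝ)/2)
      = Real.sqrt (524288*k - 14175) ^ (3:ℕ) := by
    rw [Real.sqrt_eq_rpow, ← Real.rpow_natCast _ 3, ← Real.rpow_mul hupos.le]
    norm_num
  rw [hrw]
  set s := Real.sqrt (2*k) with hsdef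
  set t := Real.sqrt (524288*k - 14175) with htdef
  set u : ℝ := 524288*k - 14175 with hudef
  -- key polynomial inequality
  have hP : 31360*u^3 - 342921600*u^2 - 18749238480000*u + 265770455454000000 > 0 := by
    nlinarith [mul_pos (sub_pos.mpr hu1) (sub_pos.mpr hu2), sq_nonneg (u - 14049),
      mul_pos (mul_pos (sub_pos.mpr hu1) (sub_pos.mpr hu2)) hupos, sq_nonneg (u-11025)]
  have hA : 0 < 8*k*s/9 := by positivity
  have hk2 : k = (u + 14175) / 524288 := by rw [hudef]; ring
  have key : (8*k*s/9)^2 - (k*t/288 - t^(3:ℕ)/254803968)^2 > 0 := by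
    have e1 : (8*k*s/9)^2 = 128*k^3/81 := by
      have : (8*k*s/9)^2 = 64*k^2*(s^2)/81 := by ring
      rw [this, hs]; ring
    have e2 : (k*t/288 - t^(3:ℕ)/254803968)^2
        = u*(k/288 - u/254803968)^2 := by
      have : (k*t/288 - t^(3:ℕ)/254803968)^2
          = (t^2)*(k/288 - (t^2)/254803968)^2 := by ring
      rw [this, ht]
    rw [e1, e2, hk2]
    have hid : 128*((u + 14175)/524288)^3/81
        - u*((u + 14175)/524288/288 - u/254803968)^2
        = (31360*u^3 - 342921600*u^2 - 18749238480000*u + 265770455454000000)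
          /8509857740691213385728 := by ring
    rw [gt_iff_lt, ← sub_pos, hid]
    rw [sub_zero]
    exact div_pos hP (by norm_num)
  have hB : k*t/288 - t^(3:ℕ)/254803968 < 8*k*s/9 := by
    nlinarith [key, hA, sq_nonneg (8*k*s/9 + (k*t/288 - t^(3:ℕ)/254803968))]
  linarith
end

section
/- For every real number k with 1575/32768 < k < 1764/32768, (8k·√(2k))/9 − k/16 + 789/524288 − (11k·√(524288k − 14175))/7776 + (175·√(524288k − 14175))/1572864 > 0. (This is the strict welfare dominance of the Hybrid mechanism over the DA conditional on a single early offer from university 2, from the proof of the lemma on welfare comparisons.) -/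
theorem hybrid_dominates_DA_early_offer_from_2
    (k : ℝ) (hk : 1575/32768 < k) (hk' : k < 1764/32768) :
    (8*k * Real.sqrt (2*k)) / 9 - k/16 + 789/524288
      - (11*k * Real.sqrt (524288*k - 14175)) / 7776
      + (175 * Real.sqrt (524288*k - 14175)) / 1572864 > 0 := by
  have hk0 : 0 < k := by linarith
  have h1 : (31:ℝ)/100 ≤ Real.sqrt (2*k) := by
    rw [show (31:ℝ)/100 = Real.sqrt ((31/100)^2) by
      rw [Real.sqrt_sq (by norm_num)]]
    apply Real.sqrt_le_sqrt
    nlinarith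
  have h2 : (0:ℝ) ≤ Real.sqrt (524288*k - 14175) := Real.sqrt_nonneg _
  have h3 := mul_nonneg h2 (by linarith : (0:ℝ) ≤ 175/1572864 - 11*k/7776)
  have h4 := mul_le_mul_of_nonneg_left h1 hk0.le
  nlinarith [h3, h4]
end

section
/- For every real number k with 1575/32768 < k < 1764/32768, (2k·√(2k))/3 − (k·√(524288k − 14175))/288 + ((524288k − 14175)^(3/2))/143327232 > 0. (This is the strict welfare dominance of the Hybrid mechanism over the DA conditional on two early offers, in either arrival order, from the proof of the lemma on welfare comparisons.) -/
theorem hybrid_dominates_DA_two_early_offers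
    (k : ℝ) (hk : 1575/32768 < k) (hk' : k < 1764/32768) :
    (2*k * Real.sqrt (2*k)) / 3 - (k * Real.sqrt (524288*k - 14175)) / 288
      + (524288*k - 14175) ^ ((3:ℝ)/2) / 143327232 > 0 := by
  set a := Real.sqrt (2*k) with ha_def
  set b := Real.sqrt (524288*k - 14175) with hb_def
  have hk0 : (0:ℝ) < 2*k := by linarith
  have hb0 : (0:ℝ) ≤ 524288*k - 14175 := by linarith
  have ha2 : a^2 = 2*k := Real.sq_sqrt hk0.le
  have hb2 : b^2 = 524288*k - 14175 := Real.sq_sqrt hb0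
  have ha : 0 < a := Real.sqrt_pos.mpr hk0
  have hbnn : 0 ≤ b := Real.sqrt_nonneg _
  have hgt : 288*a < b := by nlinarith [ha2, hb2, ha, hbnn, hk]
  have hrpow : (524288*k - 14175) ^ ((3:ℝ)/2) = b^3 := by
    rw [hb_def, Real.sqrt_eq_rpow, ← Real.rpow_natCast ((524288*k - 14175) ^ ((1:ℝ)/2)) 3,
      ← Real.rpow_mul hb0]
    norm_num
  have hk_eq : k = a^2/2 := by linarith [ha2]
  rw [hrpow, hk_eq]
  have key : 0 < (16*b - 4608*a)^2 * (8*b + 4608*a) :=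
    mul_pos (pow_pos (by linarith) 2) (by nlinarith)
  have hid : (2*(a^2/2) * a)/3 - ((a^2/2)*b)/288 + b^3/143327232
      = (16*b - 4608*a)^2 * (8*b + 4608*a) / 293534171136 := by ring
  rw [hid]
  positivity
end

section
/- For every real number k with 1575/32768 < k < 1764/32768, (k·√(524288k − 14175))/288 − ((524288k − 14175)^(3/2))/143327232 − (2k·√(2k))/3 + k/16 − 1/196608 > 0. (This is the strict welfare dominance of the DA over the DoSV conditional on the offer arrival order 2-then-1, from the proof of the lemma on welfare comparisons; it shows the DoSV does not always dominate the DA.) -/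
theorem DA_dominates_DoSV_offers_2_then_1
    (k : ℝ) (hk : 1575/32768 < k) (hk' : k < 1764/32768) :
    (k * Real.sqrt (524288*k - 14175)) / 288
      - (524288*k - 14175) ^ ((3:ℝ)/2) / 143327232
      - (2*k * Real.sqrt (2*k)) / 3 + k/16 - 1/196608 > 0 := by
  set A : ℝ := 524288*k - 14175 with hAdef
  have hApos : (0:ℝ) < A := by rw [hAdef]; nlinarith
  have hA : (0:ℝ) ≤ A := le_of_lt hApos
  set s : ℝ := Real.sqrt A with hsdef
  set t : ℝ := Real.sqrt (2*k) with htdef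
  have hs0 : 0 ≤ s := Real.sqrt_nonneg _
  have ht0 : 0 ≤ t := Real.sqrt_nonneg _
  have hs2 : s^2 = A := Real.sq_sqrt hA
  have ht2 : t^2 = 2*k := Real.sq_sqrt (by nlinarith)
  have h32 : A ^ ((3:ℝ)/2) = A * s := by
    rw [show ((3:ℝ)/2) = 1 + 1/2 by norm_num, Real.rpow_add hApos, Real.rpow_one,
      hsdef, Real.sqrt_eq_rpow]
  rw [h32]
  have hs105 : 105 < s := by nlinarith
  have ht21 : t < 21/64 := by nlinarith
  have hc : (0:ℝ) < 175/1769472 - 13*k/69984 := by nlinarith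
  nlinarith [mul_pos (by linarith : (0:ℝ) < s - 105) hc,
    mul_nonneg (by linarith : (0:ℝ) ≤ 21/64 - t) (by nlinarith : (0:ℝ) ≤ 2*k/3)]
end
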